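/- Let a = (a₁,…,aₙ) be a vector in ℝ^n with all entries nonzero, and let ε₁,…,εₙ be independent Rademacher random variables (each ±1 with probability 1/2). Then for every c ∈ ℝ, the probability that ε₁a₁ + ⋯ + εₙaₙ = c is at most C(n, ⌊n/2⌋) / 2^n. -/

import Mathlib

theorem stmt_5 (n : ℕ) (a : Fin n → ℝ) (ha : ∀ i, a i ≠ 0) (c : ℝ) :
    (Set.ncard {ε : Fin n → ℝ |
        (∀ i, ε i = 1 ∨ ε i = -1) ∧ ∑ i, ε i * a i = c} : ℝ) / 2 ^ n
      ≤ (n.choose (n / 2) : ℝ) / 2 ^ n := by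
  classical
  set E : Set (Fin n → ℝ) :=
    {ε : Fin n → ℝ | (∀ i, ε i = 1 ∨ ε i = -1) ∧ ∑ i, ε i * a i = c} with hE
  set g : Finset (Fin n) → ℝ := fun S => ∑ i ∈ S, |a i| - ∑ i ∈ Sᶜ, |a i| with hg
  set φ : (Fin n → ℝ) → Finset (Fin n) :=
    fun ε => Finset.univ.filter (fun i => ε i * a i = |a i|) with hφ
  have hkey : ∀ ε ∈ E, ∀ i, ε i * a i = |a i| ∨ ε i * a i = -|a i| := by
    intro ε hε i
    rcases hε.1 i with h | h <;> rcases abs_choice (a i) with h' | h' <;>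
      simp [h, h']
  have hsum : ∀ ε ∈ E, g (φ ε) = c := by
    intro ε hε
    have := hε.2
    rw [← this, hg, hφ]
    rw [eq_comm, ← Finset.sum_filter_add_sum_filter_not Finset.univ
      (fun i => ε i * a i = |a i|) (fun i => ε i * a i)]
    have h1 : ∑ i ∈ Finset.univ.filter (fun i => ε i * a i = |a i|), ε i * a i
        = ∑ i ∈ Finset.univ.filter (fun i => ε i * a i = |a i|), |a i| :=
      Finset.sum_congr rfl (fun i hi => (Finset.mem_filter.1 hi).2)
    have h2 : ∑ i ∈ Finset.univ.filter (fun i => ¬ ε i * a i = |a i|), ε i * a i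
        = -∑ i ∈ Finset.univ.filter (fun i => ¬ ε i * a i = |a i|), |a i| := by
      rw [← Finset.sum_neg_distrib]
      refine Finset.sum_congr rfl (fun i hi => ?_)
      rcases hkey ε hε i with h | h
      · exact absurd h (Finset.mem_filter.1 hi).2
      · exact h
    rw [h1, h2]
    simp only [Finset.compl_filter]
    ring
  have hinj : Set.InjOn φ E := by
    intro ε hε ε' hε' h
    funext i
    have hi : ε i * a i = ε' i * a i := by
      by_cases hm : i ∈ φ ε
      · have hm' : i ∈ φ ε' := h ▸ hm
        rw [(Finset.mem_filter.1 hm).2, (Finset.mem_filter.1 hm').2]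
      · have hm' : i ∉ φ ε' := h ▸ hm
        rcases hkey ε hε i with h1 | h1
        · exact absurd (Finset.mem_filter.2 ⟨Finset.mem_univ i, h1⟩) hm
        rcases hkey ε' hε' i with h2 | h2
        · exact absurd (Finset.mem_filter.2 ⟨Finset.mem_univ i, h2⟩) hm'
        rw [h1, h2]
    exact mul_right_cancel₀ (ha i) hi
  set 𝒜 : Finset (Finset (Fin n)) := Finset.univ.filter (fun S => g S = c) with h𝒜
  have hanti : IsAntichain (· ⊆ ·) (𝒜 : Set (Finset (Fin n))) := by
    intro S hS T hT hne hsub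
    have hSc : g S = c := (Finset.mem_filter.1 (Finset.mem_coe.1 hS)).2
    have hTc : g T = c := (Finset.mem_filter.1 (Finset.mem_coe.1 hT)).2
    have hlt : g S < g T := by
      have hg2 : ∀ U : Finset (Fin n), g U = 2 * ∑ i ∈ U, |a i| - ∑ i, |a i| := by
        intro U
        have := Finset.sum_add_sum_compl U (fun i => |a i|)
        show ∑ i ∈ U, |a i| - ∑ i ∈ Uᶜ, |a i| = _
        linarith
      rw [hg2, hg2]
      have : ∑ i ∈ S, |a i| < ∑ i ∈ T, |a i| := by
        obtain ⟨x, hxT, hxS⟩ := Finset.exists_of_ssubset (lt_of_le_of_ne hsub hne)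
        exact Finset.sum_lt_sum_of_subset hsub hxT hxS (abs_pos.2 (ha x))
          (fun i _ _ => abs_nonneg (a i))
      linarith
    rw [hSc, hTc] at hlt
    exact lt_irrefl c hlt
  have hcard : (E.ncard : ℝ) ≤ (n.choose (n / 2) : ℝ) := by
    have h1 : E.ncard = (φ '' E).ncard :=
      (Set.ncard_image_of_injOn hinj).symm
    have h2 : φ '' E ⊆ (𝒜 : Set (Finset (Fin n))) := by
      rintro S ⟨ε, hε, rfl⟩
      simp only [Finset.coe_filter, Set.mem_setOf_eq, h𝒜]
      exact ⟨Finset.mem_univ _, hsum ε hε⟩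
    have h3 : (φ '' E).ncard ≤ 𝒜.card := by
      rw [← Set.ncard_coe_finset]
      exact Set.ncard_le_ncard h2 (Finset.finite_toSet _)
    have h4 : 𝒜.card ≤ n.choose (n / 2) := by
      have := IsAntichain.sperner hanti
      simpa using this
    have : E.ncard ≤ n.choose (n / 2) := by omega
    exact_mod_cast this
  gcongr
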